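/- Let c denote the space of convergent real sequences (indexed by the positive integers), and let a¹ = (1)_{i}, a² = (1/i²)_{i}, b = (2/i)_{i}, all of which lie in c. The supremum of ψ(b) over all positive linear functionals ψ on c satisfying ψ(a¹) = 1 and ψ(a²) = 0 equals 0, which is the optimal value of the primal semi-infinite linear program infimize x₁ subject to x₁ + (1/i²)x₂ ≥ 2/i for all positive integers i. In particular, the limit functional ψ(v) = lim_{i→∞} v(i) is a feasible dual solution attaining the value 0, so the algebraic Lagrangian dual over the constraint space c has zero duality gap with the primal, even though the finite support dual has an infinite duality gap. -/

import Mathlib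

open Filter

/-- The subspace `c` of convergent real sequences (indexed by the positive integers). -/
def convSeqs : Submodule ℝ (ℕ+ → ℝ) where
  carrier := {v | ∃ L : ℝ, Tendsto v atTop (nhds L)}
  add_mem' := by rintro v w ⟨L, hL⟩ ⟨K, hK⟩; exact ⟨L + K, hL.add hK⟩
  zero_mem' := ⟨0, tendsto_const_nhds⟩
  smul_mem' := by rintro t v ⟨L, hL⟩; exact ⟨t • L, hL.const_smul t⟩

/-- The constraint column `a¹ = (1)ᵢ`. -/
def aOne : ℕ+ → ℝ := fun _ => 1

/-- The constraint column `a² = (1/i²)ᵢ`. -/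
noncomputable def aTwo : ℕ+ → ℝ := fun i => 1 / ((i : ℕ) : ℝ) ^ 2

/-- The right-hand side `b = (2/i)ᵢ`. -/
noncomputable def bSeq : ℕ+ → ℝ := fun i => 2 / ((i : ℕ) : ℝ)

lemma pnat_coe_tendsto_atTop : Tendsto (fun i : ℕ+ => ((i : ℕ) : ℝ)) atTop atTop :=
  tendsto_natCast_atTop_atTop.comp
    (tendsto_atTop_atTop_of_monotone (fun _ _ h => (PNat.coe_le_coe _ _).mpr h)
      (fun n => ⟨⟨n + 1, Nat.succ_pos n⟩, Nat.le_succ n⟩))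

lemma aOne_mem : aOne ∈ convSeqs := ⟨1, tendsto_const_nhds⟩

lemma aTwo_mem : aTwo ∈ convSeqs := by
  refine ⟨0, ?_⟩
  show Tendsto (fun i : ℕ+ => 1 / ((i : ℕ) : ℝ) ^ 2) atTop (nhds 0)
  have h2 : Tendsto (fun i : ℕ+ => ((i : ℕ) : ℝ) ^ 2) atTop atTop := by
    exact (tendsto_pow_atTop two_ne_zero).comp pnat_coe_tendsto_atTop
  have h3 : Tendsto (fun i : ℕ+ => ((((i : ℕ) : ℝ)) ^ 2)⁻¹) atTop (nhds 0) :=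
    tendsto_inv_atTop_zero.comp h2
  simpa [one_div] using h3

lemma bSeq_mem : bSeq ∈ convSeqs := by
  refine ⟨0, ?_⟩
  show Tendsto (fun i : ℕ+ => 2 / ((i : ℕ) : ℝ)) atTop (nhds 0)
  have h : Tendsto (fun i : ℕ+ => 2 * (((i : ℕ) : ℝ))⁻¹) atTop (nhds (2 * 0)) :=
    (tendsto_inv_atTop_zero.comp pnat_coe_tendsto_atTop).const_mul (2 : ℝ)
  simpa [div_eq_mul_inv] using h


lemma tendsto_aTwo0 : Tendsto aTwo atTop (nhds 0) := by
  show Tendsto (fun i : ℕ+ => 1 / ((i : ℕ) : ℝ) ^ 2) atTop (nhds 0)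
  have h2 : Tendsto (fun i : ℕ+ => ((i : ℕ) : ℝ) ^ 2) atTop atTop := by
    simpa [sq] using pnat_coe_tendsto_atTop.atTop_mul_atTop₀ pnat_coe_tendsto_atTop
  simpa [one_div, Function.comp_def] using tendsto_inv_atTop_zero.comp h2

lemma tendsto_bSeq0 : Tendsto bSeq atTop (nhds 0) := by
  show Tendsto (fun i : ℕ+ => 2 / ((i : ℕ) : ℝ)) atTop (nhds 0)
  have h : Tendsto (fun i : ℕ+ => 2 * (((i : ℕ) : ℝ))⁻¹) atTop (nhds (2 * 0)) :=
    (tendsto_inv_atTop_zero.comp pnat_coe_tendsto_atTop).const_mul (2 : ℝ)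
  simpa [div_eq_mul_inv] using h

lemma pnat_cast_pos (i : ℕ+) : (0 : ℝ) < ((i : ℕ) : ℝ) := by exact_mod_cast i.pos

lemma amgm_key {e t : ℝ} (he : 0 < e) (ht : 0 < t) :
    2 / t ≤ e + 4 / e * (1 / t ^ 2) := by
  have hne : e ≠ 0 := ne_of_gt he
  have htne : t ≠ 0 := ne_of_gt ht
  have hkey : e + 4 / e * (1 / t ^ 2) - 2 / t = ((e * t - 1) ^ 2 + 3) / (e * t ^ 2) := by
    field_simp
    ring
  have hnum : (0 : ℝ) ≤ ((e * t - 1) ^ 2 + 3) / (e * t ^ 2) :=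
    div_nonneg (by positivity) (by positivity)
  linarith [hkey ▸ hnum]

/-- The limit functional on `c`. -/
noncomputable def limF : convSeqs →ₗ[ℝ] ℝ where
  toFun v := limUnder atTop (v : ℕ+ → ℝ)
  map_add' v w := by
    obtain ⟨L, hL⟩ := v.2
    obtain ⟨K, hK⟩ := w.2
    have hvw : Tendsto ((v : ℕ+ → ℝ) + (w : ℕ+ → ℝ)) atTop (nhds (L + K)) := hL.add hK
    show limUnder atTop ((v + w : convSeqs) : ℕ+ → ℝ)
      = limUnder atTop (v : ℕ+ → ℝ) + limUnder atTop (w : ℕ+ → ℝ)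
    have hco : ((v + w : convSeqs) : ℕ+ → ℝ) = (v : ℕ+ → ℝ) + (w : ℕ+ → ℝ) := rfl
    rw [hco, hvw.limUnder_eq, hL.limUnder_eq, hK.limUnder_eq]
  map_smul' t v := by
    obtain ⟨L, hL⟩ := v.2
    have htv : Tendsto (t • (v : ℕ+ → ℝ)) atTop (nhds (t • L)) := hL.const_smul t
    show limUnder atTop ((t • v : convSeqs) : ℕ+ → ℝ)
      = (RingHom.id ℝ) t • limUnder atTop (v : ℕ+ → ℝ)
    have hco : ((t • v : convSeqs) : ℕ+ → ℝ) = t • (v : ℕ+ → ℝ) := rfl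
    rw [hco, htv.limUnder_eq, hL.limUnder_eq]
    simp

lemma limF_eq {v : ℕ+ → ℝ} {L : ℝ} (h : Tendsto v atTop (nhds L)) (hv : v ∈ convSeqs) :
    limF ⟨v, hv⟩ = L := h.limUnder_eq

lemma limF_pos (v : convSeqs) (hv : ∀ i, 0 ≤ (v : ℕ+ → ℝ) i) : 0 ≤ limF v := by
  obtain ⟨L, hL⟩ := v.2
  have : limF v = L := hL.limUnder_eq
  rw [this]
  exact ge_of_tendsto' hL hv

lemma dual_val_nonpos {ψ : convSeqs →ₗ[ℝ] ℝ} {r : ℝ}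
    (hpos : ∀ v : convSeqs, (∀ i, 0 ≤ (v : ℕ+ → ℝ) i) → 0 ≤ ψ v)
    (h1 : ψ ⟨aOne, aOne_mem⟩ = 1) (h2 : ψ ⟨aTwo, aTwo_mem⟩ = 0)
    (hb : ψ ⟨bSeq, bSeq_mem⟩ = r) : r ≤ 0 := by
  have : ∀ e : ℝ, 0 < e → r ≤ 0 + e := by
    intro e he
    set w : convSeqs := e • ⟨aOne, aOne_mem⟩ + (4 / e) • ⟨aTwo, aTwo_mem⟩
      - ⟨bSeq, bSeq_mem⟩ with hw
    have hwpos : ∀ i, 0 ≤ (w : ℕ+ → ℝ) i := by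
      intro i
      have hcoe : (w : ℕ+ → ℝ) i = e * aOne i + (4 / e) * aTwo i - bSeq i := by
        simp [hw]
      rw [hcoe]
      have := amgm_key he (pnat_cast_pos i)
      simp only [aOne, aTwo, bSeq]
      linarith
    have h0 : 0 ≤ ψ w := hpos w hwpos
    have hψw : ψ w = e * 1 + (4 / e) * 0 - r := by
      rw [hw]
      simp only [map_sub, map_add, map_smul, h1, h2, hb, smul_eq_mul]
    rw [hψw] at h0
    linarith
  exact le_of_forall_pos_le_add this

lemma primal_val_nonneg {r : ℝ} {x : ℝ × ℝ}
    (hx : ∀ i : ℕ+, x.1 + (1 / ((i : ℕ) : ℝ) ^ 2) * x.2 ≥ 2 / ((i : ℕ) : ℝ))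
    (hr : x.1 = r) : 0 ≤ r := by
  have hT : Tendsto (fun i : ℕ+ => 2 / ((i : ℕ) : ℝ) - (1 / ((i : ℕ) : ℝ) ^ 2) * x.2)
      atTop (nhds (0 - 0 * x.2)) := tendsto_bSeq0.sub (tendsto_aTwo0.mul_const x.2)
  have hT0 : Tendsto (fun i : ℕ+ => 2 / ((i : ℕ) : ℝ) - (1 / ((i : ℕ) : ℝ) ^ 2) * x.2)
      atTop (nhds 0) := by simpa using hT
  refine le_of_tendsto' hT0 fun i => ?_
  have := hx i
  linarith [hr ▸ this]

/-- For the SILP `inf x₁ s.t. x₁ + (1/i²)x₂ ≥ 2/i` (`i` a positive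
integer), with data `a¹ = (1)ᵢ, a² = (1/i²)ᵢ, b = (2/i)ᵢ ∈ c`: the supremum of `ψ(b)`
over positive linear functionals `ψ` on `c` with `ψ(a¹) = 1` and `ψ(a²) = 0` equals `0`,
which is the optimal value of the primal. In particular the limit functional is a
feasible dual solution attaining the value `0` (zero duality gap over the constraint
space `c`), even though the finite support dual is infeasible (infinite duality gap). -/
theorem algebraic_dual_over_c_closes_gap :
    sSup {r : ℝ | ∃ ψ : convSeqs →ₗ[ℝ] ℝ,
        (∀ v : convSeqs, (∀ i, 0 ≤ (v : ℕ+ → ℝ) i) → 0 ≤ ψ v) ∧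
        ψ ⟨aOne, aOne_mem⟩ = 1 ∧ ψ ⟨aTwo, aTwo_mem⟩ = 0 ∧ ψ ⟨bSeq, bSeq_mem⟩ = r} = 0 ∧
    sInf {r : ℝ | ∃ x : ℝ × ℝ,
        (∀ i : ℕ+, x.1 + (1 / ((i : ℕ) : ℝ) ^ 2) * x.2 ≥ 2 / ((i : ℕ) : ℝ)) ∧
        x.1 = r} = 0 ∧
    (∃ ψ : convSeqs →ₗ[ℝ] ℝ,
        (∀ v : convSeqs, (∀ i, 0 ≤ (v : ℕ+ → ℝ) i) → 0 ≤ ψ v) ∧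
        (∀ (v : ℕ+ → ℝ) (L : ℝ), Tendsto v atTop (nhds L) →
          ∀ hv : v ∈ convSeqs, ψ ⟨v, hv⟩ = L) ∧
        ψ ⟨aOne, aOne_mem⟩ = 1 ∧ ψ ⟨aTwo, aTwo_mem⟩ = 0 ∧ ψ ⟨bSeq, bSeq_mem⟩ = 0) ∧
    ¬ ∃ u : ℕ+ → ℝ, {i | u i ≠ 0}.Finite ∧ (∀ i, 0 ≤ u i) ∧
        (∑ᶠ i : ℕ+, u i) = 1 ∧ (∑ᶠ i : ℕ+, (1 / ((i : ℕ) : ℝ) ^ 2) * u i) = 0 := by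
  refine ⟨?_, ?_, ?_, ?_⟩
  · -- dual sup = 0
    apply le_antisymm
    · apply csSup_le
      · exact ⟨0, limF, limF_pos, limF_eq tendsto_const_nhds _, limF_eq tendsto_aTwo0 _,
          limF_eq tendsto_bSeq0 _⟩
      · rintro r ⟨ψ, hpos, h1, h2, hb⟩
        exact dual_val_nonpos hpos h1 h2 hb
    · apply le_csSup
      · exact ⟨0, by rintro r ⟨ψ, hpos, h1, h2, hb⟩; exact dual_val_nonpos hpos h1 h2 hb⟩
      · exact ⟨limF, limF_pos, limF_eq tendsto_const_nhds _, limF_eq tendsto_aTwo0 _,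
          limF_eq tendsto_bSeq0 _⟩
  · -- primal inf = 0
    have hbdd : BddBelow {r : ℝ | ∃ x : ℝ × ℝ,
        (∀ i : ℕ+, x.1 + (1 / ((i : ℕ) : ℝ) ^ 2) * x.2 ≥ 2 / ((i : ℕ) : ℝ)) ∧ x.1 = r} :=
      ⟨0, by rintro r ⟨x, hx, hr⟩; exact primal_val_nonneg hx hr⟩
    have hmem : ∀ e : ℝ, 0 < e → e ∈ {r : ℝ | ∃ x : ℝ × ℝ,
        (∀ i : ℕ+, x.1 + (1 / ((i : ℕ) : ℝ) ^ 2) * x.2 ≥ 2 / ((i : ℕ) : ℝ)) ∧ x.1 = r} := by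
      intro e he
      refine ⟨(e, 4 / e), fun i => ?_, rfl⟩
      have := amgm_key he (pnat_cast_pos i)
      dsimp only
      linarith
    apply le_antisymm
    · refine le_of_forall_pos_le_add fun e he => ?_
      have h2 := csInf_le hbdd (hmem e he)
      linarith
    · exact le_csInf ⟨1, hmem 1 one_pos⟩ (by rintro r ⟨x, hx, hr⟩; exact primal_val_nonneg hx hr)
  · exact ⟨limF, limF_pos, fun v L h hv => limF_eq h hv, limF_eq tendsto_const_nhds _,
      limF_eq tendsto_aTwo0 _, limF_eq tendsto_bSeq0 _⟩
  · rintro ⟨u, hfin, hnn, hsum1, hsum2⟩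
    set g : ℕ+ → ℝ := fun i => (1 / ((i : ℕ) : ℝ) ^ 2) * u i with hg
    have hgfin : (Function.support g).Finite := by
      refine hfin.subset fun i hi => ?_
      simp only [Function.mem_support, hg] at hi
      intro hui
      exact hi (by rw [hui, mul_zero])
    have hgnn : ∀ j, 0 ≤ g j := fun j =>
      mul_nonneg (by positivity) (hnn j)
    have hzero : ∀ i, u i = 0 := by
      intro i
      have h1 : g i ≤ ∑ᶠ j, g j := single_le_finsum i hgfin hgnn
      rw [hsum2] at h1
      have h2 : g i = 0 := le_antisymm h1 (hgnn i)
      have hpos : (0:ℝ) < 1 / ((i : ℕ) : ℝ) ^ 2 := by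
        have := pnat_cast_pos i; positivity
      exact (mul_eq_zero.mp h2).resolve_left (ne_of_gt hpos)
    have : (∑ᶠ i : ℕ+, u i) = 0 := by
      rw [finsum_congr hzero]; exact finsum_zero
    rw [hsum1] at this
    exact one_ne_zero this
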